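/- If (⟨W, eₙ⟩)ₙ are independent standard Gaussian random variables and (sₙ) is a summable real sequence with 1 + sₙ > 0 for all n, then under the tilted probability measure with density proportional to exp(-½ Σₙ sₙ ⟨W,eₙ⟩²), the random variables ⟨W,eₙ⟩ are independent zero-mean Gaussians with variance (1+sₙ)^{-1}. -/

import Mathlib

open MeasureTheory ProbabilityTheory
open Real
open scoped NNReal ENNReal

lemma tg_pdf_eq (s : ℝ) (hs : 0 < 1 + s) (x : ℝ) :
    gaussianPDFReal 0 1 x * rexp (-(1/2) * (s * x ^ 2))
      = (Real.sqrt (1 + s))⁻¹ * gaussianPDFReal 0 (Real.toNNReal (1 + s))⁻¹ x := by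
  have hvr : (((Real.toNNReal (1 + s))⁻¹ : ℝ≥0) : ℝ) = (1 + s)⁻¹ := by
    rw [NNReal.coe_inv, Real.coe_toNNReal _ hs.le]
  unfold gaussianPDFReal
  rw [hvr]
  have h2π : (0:ℝ) < 2 * π := by positivity
  have hsq : Real.sqrt (2 * π * (1+s)⁻¹) = Real.sqrt (2*π) * (Real.sqrt (1+s))⁻¹ := by
    rw [Real.sqrt_mul h2π.le, Real.sqrt_inv]
  rw [hsq]
  have h1 : Real.sqrt (1+s) ≠ 0 := by positivity
  have h2 : Real.sqrt (2*π) ≠ 0 := by positivity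
  rw [mul_assoc, ← Real.exp_add, mul_inv, inv_inv]
  have hexp : -(x - 0) ^ 2 / (2 * (1:ℝ≥0)) + -(1/2) * (s * x ^ 2)
      = -(x - 0) ^ 2 / (2 * (1+s)⁻¹) := by
    have : ((1:ℝ≥0):ℝ) = (1:ℝ) := by norm_num
    rw [this]
    field_simp
    ring
  rw [hexp, NNReal.coe_one]
  field_simp

lemma tg_phi_meas (s : ℝ) : Measurable fun x : ℝ => ENNReal.ofReal (rexp (-(1/2) * (s * x ^ 2))) := by
  fun_prop

lemma tg_lintegral (s : ℝ) (hs : 0 < 1 + s) (A : Set ℝ) (hA : MeasurableSet A) :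
    ∫⁻ x, A.indicator (1 : ℝ → ℝ≥0∞) x * ENNReal.ofReal (rexp (-(1/2) * (s * x ^ 2)))
        ∂(gaussianReal 0 1)
      = ENNReal.ofReal (Real.sqrt (1 + s))⁻¹
          * gaussianReal 0 (Real.toNNReal (1 + s))⁻¹ A := by
  have hv : (Real.toNNReal (1 + s))⁻¹ ≠ 0 :=
    inv_ne_zero (by simp [← NNReal.coe_pos, Real.toNNReal_pos.2 hs, ne_of_gt, Real.toNNReal_pos] )
  set φ : ℝ → ℝ≥0∞ := fun x => ENNReal.ofReal (rexp (-(1/2) * (s * x ^ 2))) with hφdef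
  have hφ : Measurable φ := tg_phi_meas s
  have h1 : ∀ x, A.indicator (1 : ℝ → ℝ≥0∞) x * φ x = A.indicator φ x := by
    intro x
    by_cases hx : x ∈ A <;> simp [Set.indicator, hx]
  rw [lintegral_congr h1, lintegral_indicator hA φ, gaussianReal_of_var_ne_zero 0 (one_ne_zero), restrict_withDensity hA,
    lintegral_withDensity_eq_lintegral_mul _ (measurable_gaussianPDF 0 1) hφ]
  have h2 : ∀ x : ℝ, (gaussianPDF 0 1 * φ) x
      = ENNReal.ofReal (Real.sqrt (1 + s))⁻¹ * gaussianPDF 0 (Real.toNNReal (1 + s))⁻¹ x := by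
    intro x
    simp only [Pi.mul_apply, gaussianPDF, hφdef]
    rw [← ENNReal.ofReal_mul (gaussianPDFReal_nonneg _ _ _), tg_pdf_eq s hs x,
      ENNReal.ofReal_mul (by positivity)]
  simp only [h2]
  rw [lintegral_const_mul _ (measurable_gaussianPDF _ _), ← gaussianReal_apply _ hv A]

lemma tg_indep_prod {Ω : Type*} [MeasurableSpace Ω] {P : Measure Ω}
    {X : ℕ → Ω → ℝ} (hXmeas : ∀ n, Measurable (X n))
    (hindep : iIndepFun X P)
    (T : Finset ℕ) (g : ℕ → ℝ → ℝ≥0∞) (hg : ∀ i ∈ T, Measurable (g i))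
    (G : Ω → ℝ≥0∞)
    (hG : Measurable[⨆ n ∈ ((T : Set ℕ))ᶜ, MeasurableSpace.comap (X n) Real.measurableSpace] G) :
    ∫⁻ ω, (∏ i ∈ T, g i (X i ω)) * G ω ∂P
      = (∏ i ∈ T, ∫⁻ ω, g i (X i ω) ∂P) * ∫⁻ ω, G ω ∂P := by
  classical
  set m : ℕ → MeasurableSpace Ω := fun n => MeasurableSpace.comap (X n) Real.measurableSpace with hm
  have h_le : ∀ n, m n ≤ ‹MeasurableSpace Ω› := fun n => (hXmeas n).comap_le
  have hXm : ∀ n, Measurable[m n] (X n) := fun n => Measurable.of_comap_le le_rfl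
  induction T using Finset.induction with
  | empty => simp
  | insert i T hi ih =>
    have hgi : Measurable (g i) := hg i (Finset.mem_insert_self i T)
    have hMg_le : (⨆ n ∈ ({i} : Set ℕ)ᶜ, m n) ≤ ‹MeasurableSpace Ω› :=
      iSup₂_le fun n _ => h_le n
    have hindep2 : Indep (m i) (⨆ n ∈ ({i} : Set ℕ)ᶜ, m n) P := by
      have := indep_iSup_of_disjoint h_le hindep (disjoint_compl_right (a := ({i} : Set ℕ)))
      simpa using this
    have hTsub : ((insert i T : Finset ℕ) : Set ℕ)ᶜ ⊆ ({i} : Set ℕ)ᶜ := by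
      intro n hn
      simp only [Finset.coe_insert, Set.mem_compl_iff, Set.mem_insert_iff] at hn ⊢
      exact fun h => hn (Or.inl h)
    have hG' : Measurable[⨆ n ∈ ({i} : Set ℕ)ᶜ, m n] G :=
      hG.mono (biSup_mono hTsub) le_rfl
    have hrest : Measurable[⨆ n ∈ ({i} : Set ℕ)ᶜ, m n]
        fun ω => (∏ j ∈ T, g j (X j ω)) * G ω := by
      refine Measurable.mul ?_ hG'
      refine Finset.measurable_prod T fun j hj => ?_
      have hji : j ∈ ({i} : Set ℕ)ᶜ := by
        simp only [Set.mem_compl_iff, Set.mem_singleton_iff]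
        rintro rfl; exact hi hj
      exact ((hg j (Finset.mem_insert_of_mem hj)).comp (hXm j)).mono
        (le_iSup₂ (f := fun n _ => m n) j hji) le_rfl
    have hmul := lintegral_mul_eq_lintegral_mul_lintegral_of_independent_measurableSpace
      (h_le i) hMg_le hindep2 ((hgi.comp (hXm i))) hrest (μ := P)
    have hG'' : Measurable[⨆ n ∈ ((T : Set ℕ))ᶜ, m n] G := by
      refine hG.mono (biSup_mono ?_) le_rfl
      intro n hn
      simp only [Finset.coe_insert, Set.mem_compl_iff, Set.mem_insert_iff] at hn ⊢
      exact fun h => hn (Or.inr h)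
    simp only [Function.comp] at hmul
    simp only [Finset.prod_insert hi, mul_assoc]
    rw [hmul, ih (fun j hj => hg j (Finset.mem_insert_of_mem hj)) hG'']

lemma tg_core
    {Ω : Type*} [MeasurableSpace Ω] (P : Measure Ω) [IsProbabilityMeasure P]
    (X : ℕ → Ω → ℝ) (hXmeas : ∀ n, Measurable (X n))
    (hindep : iIndepFun X P)
    (hlaw : ∀ n, Measure.map (X n) P = gaussianReal 0 1)
    (s : ℕ → ℝ) (hs1 : ∀ n, 0 < 1 + s n)
    (hconv : ∀ᵐ ω ∂P, Summable fun n => s n * (X n ω) ^ 2)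
    (D : Ω → ℝ) (hD : ∀ ω, D ω = Real.exp (-(1 / 2) * ∑' n, s n * (X n ω) ^ 2))
    (T : Finset ℕ) :
    ∃ K : ℝ≥0∞, 0 < K ∧ ∀ (A : ℕ → Set ℝ), (∀ i ∈ T, MeasurableSet (A i)) →
      ∫⁻ ω in ⋂ i ∈ T, X i ⁻¹' A i, ENNReal.ofReal (D ω) ∂P
        = (∏ i ∈ T, ENNReal.ofReal (Real.sqrt (1 + s i))⁻¹
            * gaussianReal 0 (Real.toNNReal (1 + s i))⁻¹ (A i)) * K := by
  classical
  have hXnMT : ∀ n ∈ ((T : Set ℕ))ᶜ,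
      Measurable[⨆ n ∈ ((T : Set ℕ))ᶜ, MeasurableSpace.comap (X n) Real.measurableSpace] (X n) :=
    fun n hn => (Measurable.of_comap_le le_rfl).mono
      (le_iSup₂ (f := fun n _ => MeasurableSpace.comap (X n) Real.measurableSpace) n hn) le_rfl
  set Ea : Ω → ℝ≥0∞ := fun ω => ∑' n : ((T : Set ℕ)ᶜ : Set ℕ), ENNReal.ofReal (s n * X n ω ^ 2) with hEadef
  set Eb : Ω → ℝ≥0∞ := fun ω => ∑' n : ((T : Set ℕ)ᶜ : Set ℕ), ENNReal.ofReal (-(s n * X n ω ^ 2))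
    with hEbdef
  have hEa : Measurable[⨆ n ∈ ((T : Set ℕ))ᶜ, MeasurableSpace.comap (X n) Real.measurableSpace]
      Ea :=
    Measurable.ennreal_tsum fun n =>
      (((hXnMT n n.2).pow_const 2).const_mul (s n)).ennreal_ofReal
  have hEb : Measurable[⨆ n ∈ ((T : Set ℕ))ᶜ, MeasurableSpace.comap (X n) Real.measurableSpace]
      Eb :=
    Measurable.ennreal_tsum fun n =>
      ((((hXnMT n n.2).pow_const 2).const_mul (s n)).neg).ennreal_ofReal
  set G : Ω → ℝ≥0∞ := fun ω => ENNReal.ofReal (rexp (-(1/2) * ((Ea ω).toReal - (Eb ω).toReal)))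
    with hGdef
  have hGMT : Measurable[⨆ n ∈ ((T : Set ℕ))ᶜ, MeasurableSpace.comap (X n) Real.measurableSpace]
      G := by
    have h1 := (hEa.ennreal_toReal.sub hEb.ennreal_toReal).const_mul (-(1/2 : ℝ))
    exact (Real.measurable_exp.comp h1).ennreal_ofReal
  have hGmeas : Measurable G :=
    hGMT.mono (iSup₂_le fun n _ => (hXmeas n).comap_le) le_rfl
  have hGpos : ∀ ω, 0 < G ω := fun ω => ENNReal.ofReal_pos.2 (Real.exp_pos _)
  have hmax : ∀ x : ℝ, ENNReal.ofReal x = ENNReal.ofReal (max x 0) := by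
    intro x
    rcases le_total x 0 with h | h
    · rw [ENNReal.ofReal_eq_zero.2 h, eq_comm, ENNReal.ofReal_eq_zero, max_eq_right h]
    · rw [max_eq_left h]
  have hae : ∀ᵐ ω ∂P, ENNReal.ofReal (D ω)
      = (∏ i ∈ T, ENNReal.ofReal (rexp (-(1/2) * (s i * X i ω ^ 2)))) * G ω := by
    filter_upwards [hconv] with ω hsum
    have habs : Summable fun n : ((T : Set ℕ)ᶜ : Set ℕ) => |s n * X n ω ^ 2| := (hsum.subtype _).abs
    have hsumT : Summable fun n : ((T : Set ℕ)ᶜ : Set ℕ) => max (s n * X n ω ^ 2) 0 :=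
      habs.of_nonneg_of_le (fun n => le_max_right _ _)
        (fun n => max_le (le_abs_self _) (abs_nonneg _))
    have hsumT' : Summable fun n : ((T : Set ℕ)ᶜ : Set ℕ) => max (-(s n * X n ω ^ 2)) 0 :=
      habs.of_nonneg_of_le (fun n => le_max_right _ _)
        (fun n => max_le (by rw [← abs_neg]; exact le_abs_self _) (abs_nonneg _))
    have hEaω : (Ea ω).toReal = ∑' n : ((T : Set ℕ)ᶜ : Set ℕ), max (s n * X n ω ^ 2) 0 := by
      have h1 : Ea ω = ENNReal.ofReal (∑' n : ((T : Set ℕ)ᶜ : Set ℕ), max (s n * X n ω ^ 2) 0) := by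
        rw [hEadef, ENNReal.ofReal_tsum_of_nonneg (fun n => le_max_right _ _) hsumT]
        exact tsum_congr fun n => hmax _
      rw [h1, ENNReal.toReal_ofReal (tsum_nonneg fun n => le_max_right _ _)]
    have hEbω : (Eb ω).toReal = ∑' n : ((T : Set ℕ)ᶜ : Set ℕ), max (-(s n * X n ω ^ 2)) 0 := by
      have h1 : Eb ω = ENNReal.ofReal (∑' n : ((T : Set ℕ)ᶜ : Set ℕ), max (-(s n * X n ω ^ 2)) 0) := by
        rw [hEbdef, ENNReal.ofReal_tsum_of_nonneg (fun n => le_max_right _ _) hsumT']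
        exact tsum_congr fun n => hmax _
      rw [h1, ENNReal.toReal_ofReal (tsum_nonneg fun n => le_max_right _ _)]
    have hdiff : (Ea ω).toReal - (Eb ω).toReal = ∑' n : ((T : Set ℕ)ᶜ : Set ℕ), s n * X n ω ^ 2 := by
      rw [hEaω, hEbω, ← Summable.tsum_sub hsumT hsumT']
      refine tsum_congr fun n => ?_
      rcases le_total (s n * X n ω ^ 2) 0 with h | h
      · rw [max_eq_right h, max_eq_left (neg_nonneg.2 h)]; ring
      · rw [max_eq_left h, max_eq_right (neg_nonpos.2 h)]; ring
    have hsplit : ∑' n, s n * X n ω ^ 2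
        = (∑ i ∈ T, s i * X i ω ^ 2) + ∑' n : ((T : Set ℕ)ᶜ : Set ℕ), s n * X n ω ^ 2 :=
      (hsum.sum_add_tsum_compl).symm
    rw [hD ω, hsplit, mul_add, Real.exp_add, hGdef]
    simp only []
    rw [hdiff, Finset.mul_sum, Real.exp_sum,
      ENNReal.ofReal_mul (Finset.prod_nonneg fun i _ => (Real.exp_pos _).le),
      ENNReal.ofReal_prod_of_nonneg fun i _ => (Real.exp_pos _).le]
  refine ⟨∫⁻ ω, G ω ∂P, ?_, ?_⟩
  · rw [lintegral_pos_iff_support hGmeas]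
    have hsupp : Function.support G = Set.univ := Set.eq_univ_of_forall fun ω => (hGpos ω).ne'
    simp [hsupp]
  intro A hA
  set g : ℕ → ℝ → ℝ≥0∞ :=
    fun i x => (A i).indicator (1 : ℝ → ℝ≥0∞) x * ENNReal.ofReal (rexp (-(1/2) * (s i * x ^ 2)))
    with hgdef
  have hgmeas : ∀ i ∈ T, Measurable (g i) :=
    fun i hi => (measurable_one.indicator (hA i hi)).mul (tg_phi_meas (s i))
  have hS : MeasurableSet (⋂ i ∈ T, X i ⁻¹' A i) :=
    Finset.measurableSet_biInter T fun i hi => hXmeas i (hA i hi)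
  rw [← lintegral_indicator hS]
  have hind : ∀ ω, (⋂ i ∈ T, X i ⁻¹' A i).indicator (fun ω => ENNReal.ofReal (D ω)) ω
      = (∏ i ∈ T, (A i).indicator (1 : ℝ → ℝ≥0∞) (X i ω)) * ENNReal.ofReal (D ω) := by
    intro ω
    by_cases hω : ω ∈ ⋂ i ∈ T, X i ⁻¹' A i
    · rw [Set.indicator_of_mem hω]
      have h1 : ∀ i ∈ T, (A i).indicator (1 : ℝ → ℝ≥0∞) (X i ω) = 1 :=
        fun i hi => Set.indicator_of_mem (Set.mem_iInter₂.1 hω i hi) 1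
      rw [Finset.prod_congr rfl h1, Finset.prod_const_one, one_mul]
    · rw [Set.indicator_of_notMem hω]
      obtain ⟨i, hi, hXi⟩ : ∃ i ∈ T, X i ω ∉ A i := by
        by_contra h; push_neg at h; exact hω (Set.mem_iInter₂.2 fun i hi => h i hi)
      rw [eq_comm, mul_eq_zero]
      exact Or.inl (Finset.prod_eq_zero hi (Set.indicator_of_notMem hXi 1))
  rw [lintegral_congr hind]
  have hae2 : (fun ω => (∏ i ∈ T, (A i).indicator (1 : ℝ → ℝ≥0∞) (X i ω)) * ENNReal.ofReal (D ω))
      =ᵐ[P] fun ω => (∏ i ∈ T, g i (X i ω)) * G ω := by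
    filter_upwards [hae] with ω h
    rw [h, hgdef]
    simp only []
    rw [Finset.prod_mul_distrib]
    ring
  rw [lintegral_congr_ae hae2, tg_indep_prod hXmeas hindep T g hgmeas G hGMT]
  congr 1
  refine Finset.prod_congr rfl fun i hi => ?_
  have h1 := tg_lintegral (s i) (hs1 i) (A i) (hA i hi)
  rw [← h1, ← hlaw i,
    lintegral_map (f := fun x => (A i).indicator (1 : ℝ → ℝ≥0∞) x * ENNReal.ofReal (rexp (-(1/2) * (s i * x ^ 2))))
      ((measurable_one.indicator (hA i hi)).mul (tg_phi_meas (s i))) (hXmeas i)]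


/-- If `(X n)` are independent standard Gaussian random variables and `(s n)` is a summable
real sequence with `1 + s n > 0` for all `n`, then under the tilted probability measure with
density proportional to `exp(-½ Σ n, s n * (X n)²)`, the random variables `X n` are independent
zero-mean Gaussians with variance `(1 + s n)⁻¹`. -/
theorem tilted_gaussian_indep
    {Ω : Type*} [MeasurableSpace Ω] (P : Measure Ω) [IsProbabilityMeasure P]
    (X : ℕ → Ω → ℝ) (hXmeas : ∀ n, Measurable (X n))
    (hindep : iIndepFun X P)
    (hlaw : ∀ n, Measure.map (X n) P = gaussianReal 0 1)
    (s : ℕ → ℝ) (hs : Summable s) (hs1 : ∀ n, 0 < 1 + s n)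
    (hconv : ∀ᵐ ω ∂P, Summable fun n => s n * (X n ω) ^ 2)
    (D : Ω → ℝ) (hD : ∀ ω, D ω = Real.exp (-(1 / 2) * ∑' n, s n * (X n ω) ^ 2))
    (hDint : Integrable D P)
    (P' : Measure Ω)
    (hP' : P' = P.withDensity fun ω => ENNReal.ofReal (D ω / ∫ x, D x ∂P)) :
    iIndepFun X P' ∧
      ∀ n, Measure.map (X n) P' = gaussianReal 0 (Real.toNNReal (1 + s n))⁻¹ := by
  classical
  have hDpos : ∀ ω, 0 < D ω := fun ω => by rw [hD]; exact Real.exp_pos _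
  have hIpos : 0 < ∫ x, D x ∂P := by
    rw [integral_pos_iff_support_of_nonneg (fun ω => (hDpos ω).le) hDint]
    have hsupp : Function.support D = Set.univ := Set.eq_univ_of_forall fun ω => (hDpos ω).ne'
    simp [hsupp]
  have hofI : ENNReal.ofReal (∫ x, D x ∂P) = ∫⁻ ω, ENNReal.ofReal (D ω) ∂P :=
    ofReal_integral_eq_lintegral_ofReal hDint (Filter.Eventually.of_forall fun ω => (hDpos ω).le)
  have hP'apply : ∀ S : Set Ω, MeasurableSet S →
      P' S = (∫⁻ ω in S, ENNReal.ofReal (D ω) ∂P) * (ENNReal.ofReal (∫ x, D x ∂P))⁻¹ := by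
    intro S hS
    rw [hP', withDensity_apply _ hS]
    have h1 : ∀ ω, ENNReal.ofReal (D ω / ∫ x, D x ∂P)
        = ENNReal.ofReal (D ω) * (ENNReal.ofReal (∫ x, D x ∂P))⁻¹ := by
      intro ω
      rw [div_eq_mul_inv, ENNReal.ofReal_mul (hDpos ω).le, ENNReal.ofReal_inv_of_pos hIpos]
    simp_rw [h1]
    rw [lintegral_mul_const' _ _ (by simp [ENNReal.ofReal_eq_zero, not_le, hIpos])]
  have key : ∀ (T : Finset ℕ) (A : ℕ → Set ℝ), (∀ i ∈ T, MeasurableSet (A i)) →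
      P' (⋂ i ∈ T, X i ⁻¹' A i)
        = ∏ i ∈ T, gaussianReal 0 (Real.toNNReal (1 + s i))⁻¹ (A i) := by
    intro T A hA
    obtain ⟨K, hKpos, hK⟩ := tg_core P X hXmeas hindep hlaw s hs1 hconv D hD T
    have hnum := hK A hA
    have hden := hK (fun _ => Set.univ) (fun i _ => MeasurableSet.univ)
    simp only [Set.preimage_univ, Set.iInter_univ, Measure.restrict_univ, measure_univ,
      mul_one] at hden
    have hS : MeasurableSet (⋂ i ∈ T, X i ⁻¹' A i) :=
      Finset.measurableSet_biInter T fun i hi => hXmeas i (hA i hi)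
    rw [hP'apply _ hS, hnum, hofI, hden]
    set c : ℕ → ℝ≥0∞ := fun i => ENNReal.ofReal (Real.sqrt (1 + s i))⁻¹ with hcdef
    have hc0 : ∀ i, c i ≠ 0 := fun i => by
      rw [hcdef]
      simp only [ne_eq, ENNReal.ofReal_eq_zero, not_le, inv_pos]
      exact Real.sqrt_pos.2 (hs1 i)
    have hctop : ∀ i, c i ≠ ⊤ := fun i => ENNReal.ofReal_ne_top
    have hck0 : (∏ i ∈ T, c i) * K ≠ 0 :=
      mul_ne_zero (Finset.prod_ne_zero_iff.2 fun i _ => hc0 i) hKpos.ne'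
    have hcktop : (∏ i ∈ T, c i) * K ≠ ⊤ := by
      refine ENNReal.mul_ne_top ?_ ?_
      · exact (ENNReal.prod_lt_top fun i _ => (hctop i).lt_top).ne
      · intro hKtop
        have h1 : (∏ i ∈ T, c i) * K = ⊤ :=
          ENNReal.mul_eq_top.2 (Or.inl ⟨Finset.prod_ne_zero_iff.2 fun i _ => hc0 i, hKtop⟩)
        rw [← hden] at h1
        exact ENNReal.ofReal_ne_top (hofI ▸ h1)
    calc (∏ i ∈ T, c i * gaussianReal 0 (Real.toNNReal (1 + s i))⁻¹ (A i)) * K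
          * ((∏ i ∈ T, c i) * K)⁻¹
        = (∏ i ∈ T, gaussianReal 0 (Real.toNNReal (1 + s i))⁻¹ (A i))
            * ((∏ i ∈ T, c i) * K * ((∏ i ∈ T, c i) * K)⁻¹) := by
          rw [Finset.prod_mul_distrib]; ring
      _ = ∏ i ∈ T, gaussianReal 0 (Real.toNNReal (1 + s i))⁻¹ (A i) := by
          rw [ENNReal.mul_inv_cancel hck0 hcktop, mul_one]
  have hmarg : ∀ n (B : Set ℝ), MeasurableSet B →
      P' (X n ⁻¹' B) = gaussianReal 0 (Real.toNNReal (1 + s n))⁻¹ B := by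
    intro n B hB
    have h1 := key {n} (fun _ => B) (fun i _ => hB)
    simpa using h1
  constructor
  · rw [iIndepFun_iff_measure_inter_preimage_eq_mul]
    intro S sets H
    rw [key S sets H]
    exact Finset.prod_congr rfl fun i hi => (hmarg i (sets i) (H i hi)).symm
  · intro n
    refine Measure.ext fun B hB => ?_
    rw [Measure.map_apply (hXmeas n) hB, hmarg n B hB]
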